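/- Let T_n be a t-distributed random variable with n degrees of freedom, where T_n = Z/√(Y/n) with Z standard normal and Y ~ χ²(n) independent. If n ≥ (64/9)·log(2/α), then P(T_n ≥ √(8 log(2/α))) ≤ α. -/

import Mathlib

open MeasureTheory Real Set ProbabilityTheory

lemma gaussian_tail_aux {s : ℝ} (hs : 0 ≤ s) :
    gaussianReal 0 1 (Set.Ici s) ≤ ENNReal.ofReal (Real.exp (-s ^ 2 / 2)) := by
  rw [gaussianReal_apply 0 (by norm_num : (1 : NNReal) ≠ 0) (Set.Ici s)]
  have hpt : ∀ x ∈ Set.Ici s,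
      gaussianPDF 0 1 x ≤ ENNReal.ofReal (Real.exp (-s ^ 2 / 2)) * gaussianPDF s 1 x := by
    intro x hx
    simp only [Set.mem_Ici] at hx
    rw [gaussianPDF, gaussianPDF, ← ENNReal.ofReal_mul (Real.exp_nonneg _)]
    refine ENNReal.ofReal_le_ofReal ?_
    simp only [gaussianPDFReal, NNReal.coe_one, mul_one, sub_zero]
    have hexp : Real.exp (-x ^ 2 / 2) ≤ Real.exp (-s ^ 2 / 2) * Real.exp (-(x - s) ^ 2 / 2) := by
      rw [← Real.exp_add]
      refine Real.exp_le_exp.mpr ?_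
      nlinarith [mul_nonneg hs (sub_nonneg.mpr hx)]
    calc (Real.sqrt (2 * π))⁻¹ * Real.exp (-x ^ 2 / 2)
        ≤ (Real.sqrt (2 * π))⁻¹ * (Real.exp (-s ^ 2 / 2) * Real.exp (-(x - s) ^ 2 / 2)) :=
          mul_le_mul_of_nonneg_left hexp (by positivity)
      _ = Real.exp (-s ^ 2 / 2) * ((Real.sqrt (2 * π))⁻¹ * Real.exp (-(x - s) ^ 2 / 2)) := by
          ring
  calc ∫⁻ x in Set.Ici s, gaussianPDF 0 1 x
      ≤ ∫⁻ x in Set.Ici s, ENNReal.ofReal (Real.exp (-s ^ 2 / 2)) * gaussianPDF s 1 x :=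
        setLIntegral_mono ((measurable_gaussianPDF s 1).const_mul _) hpt
    _ = ENNReal.ofReal (Real.exp (-s ^ 2 / 2)) * ∫⁻ x in Set.Ici s, gaussianPDF s 1 x := by
        rw [lintegral_const_mul' _ _ ENNReal.ofReal_ne_top]
    _ ≤ ENNReal.ofReal (Real.exp (-s ^ 2 / 2)) * ∫⁻ x, gaussianPDF s 1 x :=
        mul_le_mul_right (setLIntegral_le_lintegral _ _) _
    _ = ENNReal.ofReal (Real.exp (-s ^ 2 / 2)) := by
        rw [lintegral_gaussianPDF_eq_one s (by norm_num : (1 : NNReal) ≠ 0), mul_one]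

lemma gamma_tail_aux {c a : ℝ} (hc : 0 < c) (ha : 0 ≤ a) :
    gammaMeasure c (1 / 2) (Set.Iic a)
      ≤ ENNReal.ofReal (Real.exp ((3 / 2) * a) * (1 / 4 : ℝ) ^ c) := by
  rw [gammaMeasure, withDensity_apply _ measurableSet_Iic]
  set K : ℝ := Real.exp ((3 / 2) * a) * (1 / 4 : ℝ) ^ c with hK
  have hKnn : 0 ≤ K := by positivity
  have hpt : ∀ x ∈ Set.Iic a,
      gammaPDF c (1 / 2) x ≤ ENNReal.ofReal K * gammaPDF c 2 x := by
    intro x hx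
    simp only [Set.mem_Iic] at hx
    rcases lt_or_ge x 0 with hx0 | hx0
    · rw [gammaPDF_of_neg hx0]; exact zero_le
    · rw [gammaPDF_of_nonneg hx0, gammaPDF_of_nonneg hx0,
        ← ENNReal.ofReal_mul hKnn]
      refine ENNReal.ofReal_le_ofReal ?_
      have h4 : ((1 / 4 : ℝ)) ^ c * (2 : ℝ) ^ c = (1 / 2 : ℝ) ^ c := by
        rw [← Real.mul_rpow (by norm_num) (by norm_num)]
        norm_num
      have hexp : Real.exp (-((1 / 2) * x)) ≤ Real.exp ((3 / 2) * a) * Real.exp (-(2 * x)) := by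
        rw [← Real.exp_add]
        exact Real.exp_le_exp.mpr (by linarith)
      calc (1 / 2 : ℝ) ^ c / Real.Gamma c * x ^ (c - 1) * Real.exp (-((1 / 2) * x))
          = ((1 / 4 : ℝ) ^ c * (2 : ℝ) ^ c) / Real.Gamma c * x ^ (c - 1)
              * Real.exp (-((1 / 2) * x)) := by rw [h4]
        _ ≤ ((1 / 4 : ℝ) ^ c * (2 : ℝ) ^ c) / Real.Gamma c * x ^ (c - 1)
              * (Real.exp ((3 / 2) * a) * Real.exp (-(2 * x))) := by
            refine mul_le_mul_of_nonneg_left hexp ?_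
            have := Real.Gamma_pos_of_pos hc
            positivity
        _ = K * ((2 : ℝ) ^ c / Real.Gamma c * x ^ (c - 1) * Real.exp (-(2 * x))) := by
            rw [hK]; ring
  calc ∫⁻ x in Set.Iic a, gammaPDF c (1 / 2) x
      ≤ ∫⁻ x in Set.Iic a, ENNReal.ofReal K * gammaPDF c 2 x :=
        setLIntegral_mono ((measurable_gammaPDFReal c 2).ennreal_ofReal.const_mul _) hpt
    _ = ENNReal.ofReal K * ∫⁻ x in Set.Iic a, gammaPDF c 2 x := by
        rw [lintegral_const_mul' _ _ ENNReal.ofReal_ne_top]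
    _ ≤ ENNReal.ofReal K * ∫⁻ x, gammaPDF c 2 x :=
        mul_le_mul_right (setLIntegral_le_lintegral _ _) _
    _ = ENNReal.ofReal K := by
        rw [lintegral_gammaPDF_eq_one hc (by norm_num : (0:ℝ) < 2), mul_one]

/-- Tail bound for the t-statistic: if `Z ~ N(0,1)` and `Y ~ χ²(n)` are independent and
`n ≥ (64/9)·log(2/α)`, then `P(Z/√(Y/n) ≥ √(8 log(2/α))) ≤ α`. -/
theorem t_statistic_tail_bound
    {Ω : Type*} [MeasureSpace Ω] [IsProbabilityMeasure (ℙ : Measure Ω)]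
    (n : ℕ) (α : ℝ) (hα : α ∈ Set.Ioo (0 : ℝ) 1)
    (Z Y : Ω → ℝ)
    (hZ : Measure.map Z ℙ = gaussianReal 0 1)
    (hY : Measure.map Y ℙ = gammaMeasure ((n : ℝ) / 2) (1 / 2))
    (hind : IndepFun Z Y ℙ)
    (hn : (64 / 9) * Real.log (2 / α) ≤ (n : ℝ)) :
    ℙ {ω | Real.sqrt (8 * Real.log (2 / α)) ≤ Z ω / Real.sqrt (Y ω / n)} ≤
      ENNReal.ofReal α := by
  obtain ⟨hα0, hα1⟩ := hα
  set L : ℝ := Real.log (2 / α) with hLdef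
  have hL : 0 < L := Real.log_pos (by rw [lt_div_iff₀ hα0]; linarith)
  have hnpos : (0 : ℝ) < n := lt_of_lt_of_le (by positivity) hn
  have hcpos : (0 : ℝ) < (n : ℝ) / 2 := by positivity
  -- a.e. measurability of Z and Y
  have hZae : AEMeasurable Z ℙ := by
    by_contra h
    rw [Measure.map_of_not_aemeasurable h] at hZ
    exact (IsProbabilityMeasure.ne_zero (gaussianReal 0 1)) hZ.symm
  haveI : IsProbabilityMeasure (gammaMeasure ((n : ℝ) / 2) (1 / 2)) :=
    isProbabilityMeasure_gammaMeasure hcpos (by norm_num)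
  have hYae : AEMeasurable Y ℙ := by
    by_contra h
    rw [Measure.map_of_not_aemeasurable h] at hY
    exact (IsProbabilityMeasure.ne_zero (gammaMeasure ((n : ℝ) / 2) (1 / 2))) hY.symm
  set s : ℝ := Real.sqrt (2 * L) with hsdef
  have hs0 : 0 ≤ s := Real.sqrt_nonneg _
  have hts : Real.sqrt (8 * L) = 2 * s := by
    rw [hsdef, show (8:ℝ) * L = 2 ^ 2 * (2 * L) by ring, Real.sqrt_mul (by positivity),
      Real.sqrt_sq (by norm_num : (0:ℝ) ≤ 2)]
  -- event inclusion
  have hsub : {ω | Real.sqrt (8 * L) ≤ Z ω / Real.sqrt (Y ω / n)} ⊆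
      (Z ⁻¹' Set.Ici s) ∪ (Y ⁻¹' Set.Iic ((n : ℝ) / 4)) := by
    intro ω hω
    simp only [Set.mem_setOf_eq] at hω
    by_cases h : Y ω ≤ (n : ℝ) / 4
    · exact Or.inr h
    · left
      push_neg at h
      have hr : (1 / 2 : ℝ) ≤ Real.sqrt (Y ω / n) := by
        rw [show (1/2 : ℝ) = Real.sqrt (1/4) by
          rw [show (1/4 : ℝ) = (1/2)^2 by norm_num, Real.sqrt_sq (by norm_num)]]
        exact Real.sqrt_le_sqrt (by rw [le_div_iff₀ hnpos]; linarith)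
      have hrpos : (0 : ℝ) < Real.sqrt (Y ω / n) := lt_of_lt_of_le (by norm_num) hr
      have := (le_div_iff₀ hrpos).mp hω
      have h2 : Real.sqrt (8 * L) * (1 / 2) ≤ Real.sqrt (8 * L) * Real.sqrt (Y ω / n) :=
        mul_le_mul_of_nonneg_left hr (Real.sqrt_nonneg _)
      have : Real.sqrt (8 * L) * (1 / 2) ≤ Z ω := le_trans h2 this
      rw [hts] at this
      simp only [Set.mem_preimage, Set.mem_Ici]
      linarith
  refine le_trans ((measure_mono hsub).trans (measure_union_le _ _)) ?_
  -- Gaussian part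
  have hZbound : ℙ (Z ⁻¹' Set.Ici s) ≤ ENNReal.ofReal (α / 2) := by
    rw [← Measure.map_apply_of_aemeasurable hZae measurableSet_Ici, hZ]
    refine le_trans (gaussian_tail_aux hs0) (le_of_eq ?_)
    congr 1
    rw [hsdef, Real.sq_sqrt (by positivity)]
    rw [show -(2 * L) / 2 = -L by ring, Real.exp_neg, hLdef, Real.exp_log (by positivity)]
    rw [inv_div]
  -- chi-squared part
  have hYbound : ℙ (Y ⁻¹' Set.Iic ((n : ℝ) / 4)) ≤ ENNReal.ofReal (α / 2) := by
    rw [← Measure.map_apply_of_aemeasurable hYae measurableSet_Iic, hY]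
    refine le_trans (gamma_tail_aux hcpos (by positivity)) (ENNReal.ofReal_le_ofReal ?_)
    have hrpow : ((1 / 4 : ℝ)) ^ ((n : ℝ) / 2) =
        Real.exp (-((n : ℝ) * Real.log 2)) := by
      rw [Real.rpow_def_of_pos (by norm_num), show (1/4 : ℝ) = 4⁻¹ by norm_num,
        Real.log_inv, show (4 : ℝ) = 2 ^ 2 by norm_num, Real.log_pow]
      ring_nf
    rw [hrpow, ← Real.exp_add]
    have hend : Real.exp (-L) = α / 2 := by
      rw [Real.exp_neg, hLdef, Real.exp_log (by positivity), inv_div]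
    rw [← hend]
    refine Real.exp_le_exp.mpr ?_
    have hlog2 : (0.6931471803 : ℝ) < Real.log 2 := Real.log_two_gt_d9
    nlinarith [hn, hL, hnpos]
  calc ℙ (Z ⁻¹' Set.Ici s) + ℙ (Y ⁻¹' Set.Iic ((n : ℝ) / 4))
      ≤ ENNReal.ofReal (α / 2) + ENNReal.ofReal (α / 2) := add_le_add hZbound hYbound
    _ = ENNReal.ofReal α := by
        rw [← ENNReal.ofReal_add (by positivity) (by positivity)]
        norm_num
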